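/- Let A, B be n×n positive definite complex matrices and let s, t satisfy either 1 ≥ t ≥ s > 1/2 or 0 ≤ t ≤ s < 1/2. Then A^s ⊗ B^{1−s} + A^{1−s} ⊗ B^s + ((t − s)/(s − 1/2)) · (A^s ⊗ B^{1−s} + A^{1−s} ⊗ B^s − 2 (A^{1/2} ⊗ B^{1/2})) ≤ A^t ⊗ B^{1−t} + A^{1−t} ⊗ B^t, where ≤ is the Loewner order on n²×n² Hermitian matrices. -/
import Mathlib


open Matrix Kronecker
open scoped ComplexOrder

section aux

lemma convex_expAffine' (c dd : ℝ) : ConvexOn ℝ Set.univ (fun x => Real.exp (c + dd*x)) := by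
  refine ⟨convex_univ, ?_⟩
  intro x _ y _ α β hα hβ hαβ
  have h := convexOn_exp.2 (Set.mem_univ (c + dd*x)) (Set.mem_univ (c + dd*y)) hα hβ hαβ
  simp only [smul_eq_mul] at h ⊢
  have : c + dd*(α*x + β*y) = α*(c+dd*x) + β*(c+dd*y) := by linear_combination (dd*0 + 1*c) * hαβ.symm
  rw [this]; exact h

lemma convex_f' (a b : ℝ) (ha : 0 < a) (hb : 0 < b) :
    ConvexOn ℝ Set.univ (fun x : ℝ => a^x * b^(1-x) + a^(1-x) * b^x) := by
  have h1 : (fun x : ℝ => a^x * b^(1-x)) = fun x => Real.exp ((Real.log b) + (Real.log a - Real.log b)*x) := by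
    funext x
    rw [Real.rpow_def_of_pos ha, Real.rpow_def_of_pos hb, ← Real.exp_add]
    ring_nf
  have h2 : (fun x : ℝ => a^(1-x) * b^x) = fun x => Real.exp ((Real.log a) + (Real.log b - Real.log a)*x) := by
    funext x
    rw [Real.rpow_def_of_pos ha, Real.rpow_def_of_pos hb, ← Real.exp_add]
    ring_nf
  have heq : (fun x : ℝ => a^x * b^(1-x) + a^(1-x) * b^x) =
      (fun x : ℝ => Real.exp ((Real.log b) + (Real.log a - Real.log b)*x)) +
      (fun x : ℝ => Real.exp ((Real.log a) + (Real.log b - Real.log a)*x)) := by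
    funext x
    have e1 := congrFun h1 x
    have e2 := congrFun h2 x
    simp only [Pi.add_apply]
    rw [← e1, ← e2]
  rw [heq]
  exact (convex_expAffine' (Real.log b) (Real.log a - Real.log b)).add
    (convex_expAffine' (Real.log a) (Real.log b - Real.log a))

lemma scalar_key' (a b s t : ℝ) (ha : 0 < a) (hb : 0 < b)
    (hst : (1 ≥ t ∧ t ≥ s ∧ s > 1/2) ∨ (0 ≤ t ∧ t ≤ s ∧ s < 1/2)) :
    0 ≤ (a^t * b^(1-t) + a^(1-t) * b^t) -
      (a^s * b^(1-s) + a^(1-s) * b^s +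
        ((t - s) / (s - 1/2)) * (a^s * b^(1-s) + a^(1-s) * b^s - 2 * (a^((1:ℝ)/2) * b^((1:ℝ)/2)))) := by
  set f : ℝ → ℝ := fun x => a^x * b^(1-x) + a^(1-x) * b^x with hf
  have hconv := convex_f' a b ha hb
  have hfhalf : f (1/2) = 2 * (a^((1:ℝ)/2) * b^((1:ℝ)/2)) := by
    show a^((1:ℝ)/2) * b^(1-(1/2):ℝ) + a^(1-(1/2):ℝ) * b^((1:ℝ)/2) = _
    norm_num; ring
  rcases hst with ⟨h1, h2, h3⟩ | ⟨h1, h2, h3⟩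
  · rcases eq_or_lt_of_le h2 with heq | hlt
    · subst heq; simp [hf]
    · have hs : (1:ℝ)/2 < s := h3
      have hsl := hconv.slope_mono_adjacent (Set.mem_univ (1/2 : ℝ)) (Set.mem_univ t) hs hlt
      rw [div_le_div_iff₀ (by linarith) (by linarith)] at hsl
      have key : ((t - s) / (s - 1/2)) * (f s - f (1/2)) ≤ f t - f s := by
        rw [div_mul_eq_mul_div, div_le_iff₀ (by linarith)]
        nlinarith [hsl]
      have hfs : f s = a^s * b^(1-s) + a^(1-s) * b^s := rfl
      have hft : f t = a^t * b^(1-t) + a^(1-t) * b^t := rfl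
      rw [hfs, hft, hfhalf] at key
      linarith [key]
  · rcases eq_or_lt_of_le h2 with heq | hlt
    · subst heq; simp [hf]
    · have hsl := hconv.slope_mono_adjacent (Set.mem_univ t) (Set.mem_univ (1/2 : ℝ)) hlt h3
      rw [div_le_div_iff₀ (by linarith) (by linarith)] at hsl
      have key : ((t - s) / (s - 1/2)) * (f s - f (1/2)) ≤ f t - f s := by
        rw [div_mul_eq_mul_div, div_le_iff_of_neg (by linarith)]
        nlinarith [hsl]
      have hfs : f s = a^s * b^(1-s) + a^(1-s) * b^s := rfl
      have hft : f t = a^t * b^(1-t) + a^(1-t) * b^t := rfl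
      rw [hfs, hft, hfhalf] at key
      linarith [key]

lemma kron_conj' {d : ℕ} (U V : Matrix (Fin d) (Fin d) ℂ) (g h : Fin d → ℂ) :
    (U * diagonal g * Uᴴ) ⊗ₖ (V * diagonal h * Vᴴ)
      = (U ⊗ₖ V) * diagonal (fun p : Fin d × Fin d => g p.1 * h p.2) * (U ⊗ₖ V)ᴴ := by
  have hct : (U ⊗ₖ V)ᴴ = Uᴴ ⊗ₖ Vᴴ := by
    ext i j; simp [conjTranspose_apply, kroneckerMap_apply, mul_comm]
  rw [hct, Matrix.mul_kronecker_mul, Matrix.mul_kronecker_mul, diagonal_kronecker_diagonal]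

lemma conj_comb' {n : Type*} [Fintype n] [DecidableEq n]
    (W D1 D2 D3 D4 D5 : Matrix n n ℂ) (c : ℝ) :
    (W*D1*Wᴴ + W*D2*Wᴴ) - (W*D3*Wᴴ + W*D4*Wᴴ + c • (W*D3*Wᴴ + W*D4*Wᴴ - (2:ℝ) • (W*D5*Wᴴ)))
      = W * ((D1 + D2) - (D3 + D4 + c • (D3 + D4 - (2:ℝ) • D5))) * Wᴴ := by
  simp only [Matrix.mul_add, Matrix.add_mul, Matrix.mul_sub, Matrix.sub_mul,
    Matrix.mul_smul, Matrix.smul_mul, smul_add, smul_sub, Matrix.mul_assoc]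

end aux

/-- Real power `A^r` of a positive definite matrix, via the (continuous)
functional calculus on selfadjoint matrices. -/
noncomputable def mpow {d : ℕ} (A : Matrix (Fin d) (Fin d) ℂ) (r : ℝ) :
    Matrix (Fin d) (Fin d) ℂ :=
  cfc (fun x : ℝ => x ^ r) A

/-- For positive definite matrices `A, B` and `1 ≥ t ≥ s > 1/2` or `0 ≤ t ≤ s < 1/2`:
`A^s ⊗ B^{1−s} + A^{1−s} ⊗ B^s + ((t−s)/(s−1/2))(A^s ⊗ B^{1−s} + A^{1−s} ⊗ B^s − 2A^{1/2} ⊗ B^{1/2})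
  ≤ A^t ⊗ B^{1−t} + A^{1−t} ⊗ B^t` in the Loewner order. -/
theorem kronecker_power_refinement {d : ℕ}
    (A B : Matrix (Fin d) (Fin d) ℂ) (hA : A.PosDef) (hB : B.PosDef)
    (s t : ℝ)
    (hst : (1 ≥ t ∧ t ≥ s ∧ s > 1/2) ∨ (0 ≤ t ∧ t ≤ s ∧ s < 1/2)) :
    ((mpow A t ⊗ₖ mpow B (1 - t) + mpow A (1 - t) ⊗ₖ mpow B t) -
      (mpow A s ⊗ₖ mpow B (1 - s) + mpow A (1 - s) ⊗ₖ mpow B s +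
        ((t - s) / (s - 1/2)) •
          (mpow A s ⊗ₖ mpow B (1 - s) + mpow A (1 - s) ⊗ₖ mpow B s -
            (2 : ℝ) • (mpow A (1/2) ⊗ₖ mpow B (1/2))))).PosSemidef := by
  set α := hA.1.eigenvalues with hα
  set β := hB.1.eigenvalues with hβ
  set U := (hA.1.eigenvectorUnitary : Matrix (Fin d) (Fin d) ℂ) with hU
  set V := (hB.1.eigenvectorUnitary : Matrix (Fin d) (Fin d) ℂ) with hV
  set W := U ⊗ₖ V with hW
  have hmA : ∀ r : ℝ, mpow A r = U * diagonal (fun i => ((α i ^ r : ℝ) : ℂ)) * Uᴴ := by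
    intro r; rw [mpow, hA.1.cfc_eq]; rfl
  have hmB : ∀ r : ℝ, mpow B r = V * diagonal (fun i => ((β i ^ r : ℝ) : ℂ)) * Vᴴ := by
    intro r; rw [mpow, hB.1.cfc_eq]; rfl
  have hk : ∀ x y : ℝ, mpow A x ⊗ₖ mpow B y
      = W * diagonal (fun p : Fin d × Fin d => ((α p.1 ^ x * β p.2 ^ y : ℝ) : ℂ)) * Wᴴ := by
    intro x y
    rw [hmA x, hmB y, kron_conj']
    congr 2
    funext p
    push_cast
    ring
  rw [hk t (1-t), hk (1-t) t, hk s (1-s), hk (1-s) s, hk (1/2) (1/2), conj_comb']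
  set c : ℝ := (t - s) / (s - 1/2) with hc
  have hdiag : (diagonal (fun p : Fin d × Fin d => ((α p.1 ^ t * β p.2 ^ (1-t) : ℝ) : ℂ))
        + diagonal (fun p : Fin d × Fin d => ((α p.1 ^ (1-t) * β p.2 ^ t : ℝ) : ℂ)))
      - (diagonal (fun p : Fin d × Fin d => ((α p.1 ^ s * β p.2 ^ (1-s) : ℝ) : ℂ))
        + diagonal (fun p : Fin d × Fin d => ((α p.1 ^ (1-s) * β p.2 ^ s : ℝ) : ℂ))
        + c • (diagonal (fun p : Fin d × Fin d => ((α p.1 ^ s * β p.2 ^ (1-s) : ℝ) : ℂ))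
            + diagonal (fun p : Fin d × Fin d => ((α p.1 ^ (1-s) * β p.2 ^ s : ℝ) : ℂ))
            - (2:ℝ) • diagonal (fun p : Fin d × Fin d => ((α p.1 ^ ((1:ℝ)/2) * β p.2 ^ ((1:ℝ)/2) : ℝ) : ℂ))))
      = diagonal (fun p : Fin d × Fin d =>
          (((α p.1 ^ t * β p.2 ^ (1-t) + α p.1 ^ (1-t) * β p.2 ^ t)
            - (α p.1 ^ s * β p.2 ^ (1-s) + α p.1 ^ (1-s) * β p.2 ^ s
              + c * (α p.1 ^ s * β p.2 ^ (1-s) + α p.1 ^ (1-s) * β p.2 ^ s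
                - 2 * (α p.1 ^ ((1:ℝ)/2) * β p.2 ^ ((1:ℝ)/2)))) : ℝ) : ℂ)) := by
    ext p q
    rcases eq_or_ne p q with rfl | hpq
    · simp only [Matrix.add_apply, Matrix.sub_apply, Matrix.smul_apply, diagonal_apply_eq]
      push_cast [Complex.real_smul]
      ring
    · simp [diagonal_apply_ne _ hpq]
  rw [hdiag]
  refine (posSemidef_diagonal_iff.mpr fun p => ?_).mul_mul_conjTranspose_same W
  rw [Complex.zero_le_real]
  exact scalar_key' (α p.1) (β p.2) s t (hA.eigenvalues_pos p.1) (hB.eigenvalues_pos p.2) hst
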